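/- Let A ∈ ℝ^{n×n}, B ∈ ℝ^{n×s}. Assume 𝒱 ∈ ℝ^{n×q} and V₊ ∈ ℝ^{n×d} satisfy 𝒱ᵀ𝒱 = I_q, V₊ᵀV₊ = I_d, 𝒱ᵀV₊ = 0, the Arnoldi relation A𝒱 = 𝒱𝒯 + V₊ T₊ Eᵀ with 𝒯 = 𝒱ᵀA𝒱, T₊ ∈ ℝ^{d×d} and E ∈ ℝ^{q×d} the last d columns of I_q, and B = 𝒱 B_m with B_m = 𝒱ᵀB. Let G : ℝ → ℝ^{q×q} be differentiable with G(t) symmetric for all t and Ġ(t) = 𝒯 G(t) + G(t) 𝒯ᵀ + B_m B_mᵀ, and set X_m(t) = 𝒱 G(t) 𝒱ᵀ. Then the spectral norm of the residual R_m(t) = Ẋ_m(t) − A X_m(t) − X_m(t) Aᵀ − B Bᵀ satisfies ‖R_m(t)‖ = ‖T₊ Ḡ(t)‖ for all t, where Ḡ(t) = Eᵀ G(t) is the d×q matrix of the last d rows of G(t). -/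

import Mathlib

open Matrix Set
open scoped Matrix.Norms.L2Operator

lemma addpow {R : Type*} [Ring R] (P Q : R) (hPQ : P*Q = 0) (hQP : Q*P = 0) :
    ∀ k : ℕ, (P+Q)^(k+1) = P^(k+1) + Q^(k+1) := by
  intro k
  induction k with
  | zero => simp
  | succ k ih =>
    have h1 : P^(k+1) * Q = 0 := by rw [pow_succ, mul_assoc, hPQ, mul_zero]
    have h2 : Q^(k+1) * P = 0 := by rw [pow_succ, mul_assoc, hQP, mul_zero]
    rw [pow_succ, ih, add_mul, mul_add, mul_add, h1, h2, ← pow_succ, ← pow_succ]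
    abel

lemma le_of_pow2_le (a b : ℝ) (hb : 0 ≤ b) (h : ∀ k : ℕ, a ^ 2^k ≤ 2 * b ^ 2^k) : a ≤ b := by
  by_contra hab
  push_neg at hab
  rcases eq_or_lt_of_le hb with hb0 | hb0
  · have h0 := h 0
    simp [← hb0] at h0
    exact absurd hab (by linarith)
  · set r := a / b with hr'
    have hr : 1 < r := (one_lt_div hb0).mpr hab
    obtain ⟨m, hm⟩ := pow_unbounded_of_one_lt (2 : ℝ) hr
    have h2 : r ^ m ≤ r ^ (2^m) := pow_le_pow_right₀ hr.le (Nat.lt_two_pow_self (n := m)).le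
    have h3 : r ^ (2^m) ≤ 2 := by
      rw [hr', div_pow, div_le_iff₀ (by positivity)]
      exact h m
    linarith

lemma sympow {n : ℕ} (X : Matrix (Fin n) (Fin n) ℝ) (hX : Xᵀ = X) (k : ℕ) :
    ‖X ^ 2^k‖ = ‖X‖ ^ 2^k := by
  induction k with
  | zero => simp
  | succ k ih =>
    have hsym : (X ^ 2^k)ᵀ = X ^ 2^k := by rw [Matrix.transpose_pow, hX]
    have hc : (X ^ 2^k)ᴴ = X ^ 2^k := by
      rw [Matrix.conjTranspose_eq_transpose_of_trivial, hsym]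
    have h2 := Matrix.l2_opNorm_conjTranspose_mul_self (X ^ 2^k)
    rw [hc] at h2
    have he : 2^(k+1) = 2^k + 2^k := by ring
    rw [he, pow_add, h2, ih, ← pow_add]

set_option maxHeartbeats 2000000 in
/-- Under the block Arnoldi relation `A𝒱 = 𝒱𝒯 + V₊ T₊ Eᵀ` (with orthonormality
`𝒱ᵀ𝒱 = I`, `V₊ᵀV₊ = I`, `𝒱ᵀV₊ = 0`, `B = 𝒱 B_m`), if `G` is a symmetric solution of the
projected equation `Ġ = 𝒯 G + G 𝒯ᵀ + B_m B_mᵀ` and `X_m = 𝒱 G 𝒱ᵀ`, then the spectral norm of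
the residual satisfies `‖R_m(t)‖ = ‖T₊ Ḡ(t)‖` with `Ḡ(t) = Eᵀ G(t)`. -/
theorem residual_norm_formula
    (n s q d : ℕ) (hn : 0 < n) (hs : 0 < s) (hq : 0 < q) (hd : 0 < d) (hdq : d ≤ q)
    (A : Matrix (Fin n) (Fin n) ℝ) (B : Matrix (Fin n) (Fin s) ℝ)
    (V : Matrix (Fin n) (Fin q) ℝ) (Vp : Matrix (Fin n) (Fin d) ℝ)
    (hV : Vᵀ * V = 1) (hVp : Vpᵀ * Vp = 1) (hVVp : Vᵀ * Vp = 0)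
    (T : Matrix (Fin q) (Fin q) ℝ) (hT : T = Vᵀ * A * V)
    (Tp : Matrix (Fin d) (Fin d) ℝ)
    (E : Matrix (Fin q) (Fin d) ℝ)
    (hE : ∀ i j, E i j = if (i : ℕ) = q - d + (j : ℕ) then 1 else 0)
    (hArnoldi : A * V = V * T + Vp * Tp * Eᵀ)
    (Bm : Matrix (Fin q) (Fin s) ℝ) (hBm : Bm = Vᵀ * B) (hB : B = V * Bm)
    (G : ℝ → Matrix (Fin q) (Fin q) ℝ)
    (hGsymm : ∀ t, (G t)ᵀ = G t)
    (hG : ∀ t, HasDerivAt G (T * G t + G t * Tᵀ + Bm * Bmᵀ) t)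
    (Xm : ℝ → Matrix (Fin n) (Fin n) ℝ) (hXm : ∀ t, Xm t = V * G t * Vᵀ)
    (Xm' : ℝ → Matrix (Fin n) (Fin n) ℝ)
    (hXm' : ∀ t, HasDerivAt Xm (Xm' t) t)
    (R : ℝ → Matrix (Fin n) (Fin n) ℝ)
    (hR : ∀ t, R t = Xm' t - A * Xm t - Xm t * Aᵀ - B * Bᵀ) :
    ∀ t, ‖R t‖ = ‖Tp * (Eᵀ * G t)‖ := by
  intro t
  haveI : Nonempty (Fin q) := ⟨⟨0, hq⟩⟩
  haveI : Nonempty (Fin d) := ⟨⟨0, hd⟩⟩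
  -- the derivative of Xm
  have hXd : Xm' t = V * (T * G t + G t * Tᵀ + Bm * Bmᵀ) * Vᵀ := by
    let L : Matrix (Fin q) (Fin q) ℝ →ₗ[ℝ] Matrix (Fin n) (Fin n) ℝ :=
      { toFun := fun X => V * X * Vᵀ
        map_add' := fun x y => by simp [Matrix.mul_add, Matrix.add_mul]
        map_smul' := fun c x => by simp [Matrix.mul_smul, Matrix.smul_mul] }
    have hL : HasDerivAt (fun u => L (G u)) (L (T * G t + G t * Tᵀ + Bm * Bmᵀ)) t :=
      (L.toContinuousLinearMap.hasFDerivAt).comp_hasDerivAt t (hG t)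
    have hL' : HasDerivAt Xm (L (T * G t + G t * Tᵀ + Bm * Bmᵀ)) t := by
      rw [funext hXm]; exact hL
    exact hL'.unique (hXm' t)|>.symm
  obtain ⟨M, hMdef⟩ : ∃ M : Matrix (Fin d) (Fin q) ℝ, M = Tp * Eᵀ * G t := ⟨_, rfl⟩
  obtain ⟨N, hNdef⟩ : ∃ N : Matrix (Fin n) (Fin n) ℝ, N = Vp * M * Vᵀ := ⟨_, rfl⟩
  have hVpV : Vpᵀ * V = 0 := by
    rw [← Matrix.transpose_transpose V, ← Matrix.transpose_mul, hVVp, Matrix.transpose_zero]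
  have mul1 : ∀ {k : ℕ} (X : Matrix (Fin q) (Fin k) ℝ), Vᵀ * (V * X) = X := fun X => by
    rw [← Matrix.mul_assoc, hV, Matrix.one_mul]
  have mul2 : ∀ {k : ℕ} (X : Matrix (Fin d) (Fin k) ℝ), Vpᵀ * (Vp * X) = X := fun X => by
    rw [← Matrix.mul_assoc, hVp, Matrix.one_mul]
  have mul3 : ∀ {k : ℕ} (X : Matrix (Fin d) (Fin k) ℝ), Vᵀ * (Vp * X) = 0 := fun X => by
    rw [← Matrix.mul_assoc, hVVp, Matrix.zero_mul]
  have mul4 : ∀ {k : ℕ} (X : Matrix (Fin q) (Fin k) ℝ), Vpᵀ * (V * X) = 0 := fun X => by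
    rw [← Matrix.mul_assoc, hVpV, Matrix.zero_mul]
  -- the residual formula
  have hNT : Nᵀ = V * (G t * (E * Tpᵀ)) * Vpᵀ := by
    rw [hNdef, hMdef]
    simp [Matrix.transpose_mul, hGsymm t, Matrix.mul_assoc]
  have hRt : R t = -(N + Nᵀ) := by
    have h1 : A * (V * G t * Vᵀ) = (V * T + Vp * Tp * Eᵀ) * (G t * Vᵀ) := by
      rw [Matrix.mul_assoc V (G t) Vᵀ, ← Matrix.mul_assoc A V (G t * Vᵀ), hArnoldi]
    have h2 : Vᵀ * Aᵀ = (V * T + Vp * Tp * Eᵀ)ᵀ := by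
      rw [← hArnoldi, ← Matrix.transpose_mul]
    have h3 : V * G t * Vᵀ * Aᵀ = V * G t * (V * T + Vp * Tp * Eᵀ)ᵀ := by
      rw [Matrix.mul_assoc (V * G t) Vᵀ Aᵀ, h2, Matrix.mul_assoc]
    rw [hR, hXd, hXm, hB, hNT, hNdef, hMdef, h1, h3]
    simp only [Matrix.transpose_add, Matrix.transpose_mul, Matrix.transpose_transpose,
      Matrix.mul_add, Matrix.add_mul, Matrix.mul_assoc]
    abel
  -- norms of the orthonormal factors
  have hnV : ‖V‖ = 1 := by
    have h := Matrix.l2_opNorm_conjTranspose_mul_self V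
    rw [Matrix.conjTranspose_eq_transpose_of_trivial, hV, CStarRing.norm_one] at h
    nlinarith [norm_nonneg V]
  have hnVp : ‖Vp‖ = 1 := by
    have h := Matrix.l2_opNorm_conjTranspose_mul_self Vp
    rw [Matrix.conjTranspose_eq_transpose_of_trivial, hVp, CStarRing.norm_one] at h
    nlinarith [norm_nonneg Vp]
  have hnVT : ‖Vᵀ‖ = 1 := by
    rw [← Matrix.conjTranspose_eq_transpose_of_trivial, Matrix.l2_opNorm_conjTranspose, hnV]
  have hnVpT : ‖Vpᵀ‖ = 1 := by
    rw [← Matrix.conjTranspose_eq_transpose_of_trivial, Matrix.l2_opNorm_conjTranspose, hnVp]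
  -- lower bound : ‖M‖ ≤ ‖R t‖
  have hVRV : Vpᵀ * R t * V = -M := by
    rw [hRt, hNT, hNdef]
    rw [hMdef]
    simp only [Matrix.mul_neg, Matrix.neg_mul, Matrix.mul_add, Matrix.add_mul,
      Matrix.mul_assoc, mul1, mul2, mul3, mul4, Matrix.mul_zero, Matrix.zero_mul,
      Matrix.mul_one, add_zero, zero_add, hV, neg_add_rev, neg_zero]
  have hlow : ‖M‖ ≤ ‖R t‖ := by
    calc ‖M‖ = ‖Vpᵀ * R t * V‖ := by rw [hVRV, norm_neg]
      _ ≤ ‖Vpᵀ * R t‖ * ‖V‖ := Matrix.l2_opNorm_mul _ _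
      _ ≤ ‖Vpᵀ‖ * ‖R t‖ * ‖V‖ :=
          mul_le_mul_of_nonneg_right (Matrix.l2_opNorm_mul _ _) (norm_nonneg _)
      _ = ‖R t‖ := by rw [hnVpT, hnV]; ring
  -- upper bound : ‖R t‖ ≤ ‖N‖ ≤ ‖M‖
  have hNN : N * N = 0 := by
    rw [hNdef]
    simp only [Matrix.mul_assoc, mul3, Matrix.mul_zero]
  have hNTNT : Nᵀ * Nᵀ = 0 := by
    rw [← Matrix.transpose_mul, hNN, Matrix.transpose_zero]
  have hPQ : (Nᵀ * N) * (N * Nᵀ) = 0 := by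
    rw [Matrix.mul_assoc, ← Matrix.mul_assoc N N, hNN, Matrix.zero_mul, Matrix.mul_zero]
  have hQP : (N * Nᵀ) * (Nᵀ * N) = 0 := by
    rw [Matrix.mul_assoc, ← Matrix.mul_assoc Nᵀ Nᵀ, hNTNT, Matrix.zero_mul, Matrix.mul_zero]
  have hScT : (Nᵀ * N + N * Nᵀ)ᵀ = Nᵀ * N + N * Nᵀ := by
    simp [Matrix.transpose_add, Matrix.transpose_mul]
  have hcN : Nᴴ = Nᵀ := Matrix.conjTranspose_eq_transpose_of_trivial N
  have hPn : ‖Nᵀ * N‖ = ‖N‖ ^ 2 := by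
    rw [← hcN, Matrix.l2_opNorm_conjTranspose_mul_self, sq]
  have hQn : ‖N * Nᵀ‖ = ‖N‖ ^ 2 := by
    have h := Matrix.l2_opNorm_conjTranspose_mul_self Nᵀ
    rw [Matrix.conjTranspose_eq_transpose_of_trivial, Matrix.transpose_transpose] at h
    rw [h, ← Matrix.conjTranspose_eq_transpose_of_trivial, Matrix.l2_opNorm_conjTranspose, sq]
  have hSle : ‖Nᵀ * N + N * Nᵀ‖ ≤ ‖N‖ ^ 2 := by
    refine le_of_pow2_le _ _ (sq_nonneg _) fun k => ?_
    obtain ⟨j, hj⟩ : ∃ j, 2^k = j+1 :=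
      ⟨2^k - 1, (Nat.succ_pred_eq_of_pos (Nat.two_pow_pos k)).symm⟩
    calc ‖Nᵀ * N + N * Nᵀ‖ ^ 2^k = ‖(Nᵀ * N + N * Nᵀ) ^ 2^k‖ := (sympow _ hScT k).symm
      _ = ‖(Nᵀ * N) ^ 2^k + (N * Nᵀ) ^ 2^k‖ := by rw [hj, addpow _ _ hPQ hQP]
      _ ≤ ‖(Nᵀ * N) ^ 2^k‖ + ‖(N * Nᵀ) ^ 2^k‖ := norm_add_le _ _
      _ = ‖Nᵀ * N‖ ^ 2^k + ‖N * Nᵀ‖ ^ 2^k := by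
          rw [sympow _ (by simp [Matrix.transpose_mul]) k,
            sympow _ (by simp [Matrix.transpose_mul]) k]
      _ ≤ 2 * (‖N‖ ^ 2) ^ 2^k := by rw [hPn, hQn]; ring_nf; linarith
  have hRN : ‖R t‖ ≤ ‖N‖ := by
    have hRsq : (R t)ᴴ * R t = Nᵀ * N + N * Nᵀ := by
      rw [Matrix.conjTranspose_eq_transpose_of_trivial, hRt]
      simp only [Matrix.transpose_neg, Matrix.transpose_add, Matrix.neg_mul, Matrix.mul_neg,
        neg_neg, Matrix.add_mul, Matrix.mul_add, Matrix.transpose_transpose, hNN, hNTNT,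
        add_zero, zero_add]
      abel
    have h := Matrix.l2_opNorm_conjTranspose_mul_self (R t)
    rw [hRsq] at h
    nlinarith [norm_nonneg (R t), norm_nonneg N, hSle, h.symm]
  have hNM : ‖N‖ ≤ ‖M‖ := by
    calc ‖N‖ = ‖Vp * M * Vᵀ‖ := by rw [hNdef]
      _ ≤ ‖Vp * M‖ * ‖Vᵀ‖ := Matrix.l2_opNorm_mul _ _
      _ ≤ ‖Vp‖ * ‖M‖ * ‖Vᵀ‖ :=
          mul_le_mul_of_nonneg_right (Matrix.l2_opNorm_mul _ _) (norm_nonneg _)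
      _ = ‖M‖ := by rw [hnVp, hnVT]; ring
  have : ‖R t‖ = ‖M‖ := le_antisymm (hRN.trans hNM) hlow
  rw [this, hMdef, Matrix.mul_assoc]
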